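/- For all integers 0 ≤ k ≤ n − 1, one has D_k(n) ≥ D_k(n−1); equivalently, E_k(n) ≤ E_k(n−1) + 1. -/

import Mathlib

/-- A (binary) decision tree over ground set `[n]` (positions `Fin n`):
leaves are labelled with a Boolean output, inner nodes with a query `i ∈ [n]`;
the left subtree corresponds to the answer `i ∉ A`, the right one to `i ∈ A`. -/
inductive DecTree (n : ℕ) : Type
  | leaf : Bool → DecTree n
  | node : Fin n → DecTree n → DecTree n → DecTree n

namespace DecTree

/-- The height (depth) of a decision tree: the maximum number of queries on a
root-to-leaf path. -/
def depth {n : ℕ} : DecTree n → ℕ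
  | leaf _ => 0
  | node _ t0 t1 => max (depth t0) (depth t1) + 1

/-- Evaluate a decision tree on an input set `A ⊆ [n]`. -/
def eval {n : ℕ} : DecTree n → Finset (Fin n) → Bool
  | leaf b, _ => b
  | node i t0 t1, A => if i ∈ A then eval t1 A else eval t0 A

end DecTree

/-- The slice: the `k`-element subsets of `[n]`. -/
def Slice (n k : ℕ) : Type := {A : Finset (Fin n) // A.card = k}

/-- A decision tree computes `f` on the slice if it evaluates to `f A` for every
`A` in the slice. -/
def Computes {n k : ℕ} (T : DecTree n) (f : Slice n k → Bool) : Prop :=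
  ∀ A : Slice n k, T.eval A.val = f A

/-- Deterministic query complexity of `f` on the slice: the minimum height of a
decision tree computing `f`. -/
noncomputable def Dquery (n k : ℕ) (f : Slice n k → Bool) : ℕ :=
  sInf {d : ℕ | ∃ T : DecTree n, T.depth ≤ d ∧ Computes T f}

/-- `Dmax n k`: the maximum deterministic query complexity over all Boolean
functions on the slice of `k`-subsets of `[n]`. -/
noncomputable def Dmax (n k : ℕ) : ℕ :=
  sSup {d : ℕ | ∃ f : Slice n k → Bool, Dquery n k f = d}

/-- `Equery n k = n - Dmax n k`. -/
noncomputable def Equery (n k : ℕ) : ℕ := n - Dmax n k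


section Aux

open DecTree

/-- Build a full decision tree querying all positions in `l`, accumulating answers. -/
def buildT {n : ℕ} (F : Finset (Fin n) → Bool) : List (Fin n) → Finset (Fin n) → DecTree n
  | [], acc => .leaf (F acc)
  | i :: l, acc => .node i (buildT F l acc) (buildT F l (insert i acc))

lemma buildT_depth {n : ℕ} (F : Finset (Fin n) → Bool) (l : List (Fin n))
    (acc : Finset (Fin n)) : (buildT F l acc).depth ≤ l.length := by
  induction l generalizing acc with
  | nil => simp [buildT, DecTree.depth]
  | cons i l ih =>
    simp only [buildT, DecTree.depth, List.length_cons]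
    have := ih acc
    have := ih (insert i acc)
    omega

lemma buildT_eval {n : ℕ} (F : Finset (Fin n) → Bool) (l : List (Fin n))
    (acc A : Finset (Fin n)) :
    (buildT F l acc).eval A = F (acc ∪ A.filter (· ∈ l)) := by
  induction l generalizing acc with
  | nil => simp [buildT, DecTree.eval]
  | cons i l ih =>
    simp only [buildT, DecTree.eval]
    by_cases hi : i ∈ A
    · rw [if_pos hi, ih]
      congr 1
      ext a
      simp only [Finset.mem_union, Finset.mem_insert, Finset.mem_filter, List.mem_cons]
      constructor
      · rintro (⟨rfl | ha⟩ | ⟨ha, hl⟩) <;> tauto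
      · rintro (ha | ⟨ha, rfl | hl⟩) <;> tauto
    · rw [if_neg hi, ih]
      congr 1
      ext a
      simp only [Finset.mem_union, Finset.mem_filter, List.mem_cons]
      constructor
      · rintro (ha | ⟨ha, hl⟩) <;> tauto
      · rintro (ha | ⟨ha, rfl | hl⟩)
        · tauto
        · exact absurd ha hi
        · tauto

lemma exists_tree {n k : ℕ} (f : Slice n k → Bool) :
    ∃ T : DecTree n, T.depth ≤ n ∧ Computes T f := by
  classical
  set F : Finset (Fin n) → Bool := fun A => if h : A.card = k then f ⟨A, h⟩ else false with hF
  refine ⟨buildT F (List.finRange n) ∅, ?_, ?_⟩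
  · simpa using buildT_depth F (List.finRange n) ∅
  · intro A
    rw [buildT_eval]
    have : (∅ : Finset (Fin n)) ∪ A.val.filter (· ∈ List.finRange n) = A.val := by
      ext a; simp [List.mem_finRange]
    rw [this, hF]
    simp [A.2]; rfl

lemma dquery_le_n (n k : ℕ) (f : Slice n k → Bool) : Dquery n k f ≤ n := by
  obtain ⟨T, hd, hc⟩ := exists_tree f
  exact Nat.sInf_le ⟨T, hd, hc⟩

lemma dmax_bdd (n k : ℕ) : ∀ d ∈ {d : ℕ | ∃ f : Slice n k → Bool, Dquery n k f = d}, d ≤ n := by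
  rintro d ⟨f, rfl⟩; exact dquery_le_n n k f

/-- Restriction of a tree over `[m+1]` to `[m]` by answering "not in `A`" to
queries of the last element. -/
def restrict {m : ℕ} : DecTree (m + 1) → DecTree m
  | .leaf b => .leaf b
  | .node i t0 t1 =>
    if h : (i : ℕ) < m then .node ⟨i, h⟩ (restrict t0) (restrict t1) else restrict t0

lemma restrict_depth {m : ℕ} (T : DecTree (m + 1)) : (restrict T).depth ≤ T.depth := by
  induction T with
  | leaf b => simp [restrict, DecTree.depth]
  | node i t0 t1 ih0 ih1 =>
    simp only [restrict]
    split
    · simp only [DecTree.depth]; omega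
    · simp only [DecTree.depth]; omega

def emb (m : ℕ) : Fin m ↪ Fin (m + 1) := ⟨Fin.castSucc, Fin.castSucc_injective m⟩

lemma restrict_eval {m : ℕ} (T : DecTree (m + 1)) (B : Finset (Fin m)) :
    (restrict T).eval B = T.eval (B.map (emb m)) := by
  induction T with
  | leaf b => rfl
  | node i t0 t1 ih0 ih1 =>
    simp only [restrict]
    split
    case isTrue h =>
      have hmem : i ∈ B.map (emb m) ↔ (⟨(i : ℕ), h⟩ : Fin m) ∈ B := by
        constructor
        · intro hm
          rw [Finset.mem_map] at hm
          obtain ⟨b, hb, hbe⟩ := hm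
          have hv : (b : ℕ) = (i : ℕ) := congrArg Fin.val hbe
          have : b = (⟨(i : ℕ), h⟩ : Fin m) := Fin.ext hv
          rwa [this] at hb
        · intro hb
          rw [Finset.mem_map]
          exact ⟨⟨(i : ℕ), h⟩, hb, Fin.ext rfl⟩
      simp only [DecTree.eval, hmem, ih0, ih1]
    case isFalse h =>
      have hi : i ∉ B.map (emb m) := by
        rw [Finset.mem_map]
        rintro ⟨b, hb, rfl⟩
        exact h b.isLt
      simp only [DecTree.eval, if_neg hi, ih0]

lemma dmax_mono (m k : ℕ) : Dmax m k ≤ Dmax (m + 1) k := by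
  classical
  have hne : {d : ℕ | ∃ f : Slice m k → Bool, Dquery m k f = d}.Nonempty :=
    ⟨_, fun _ => false, rfl⟩
  apply csSup_le hne
  rintro d ⟨f, rfl⟩
  -- extend f to the bigger slice
  set f' : Slice (m + 1) k → Bool := fun A =>
    if h : ∃ B : Slice m k, B.val.map (emb m) = A.val then f h.choose else false with hf'
  have key : Dquery m k f ≤ Dquery (m + 1) k f' := by
    have hne' : {d : ℕ | ∃ T : DecTree (m + 1), T.depth ≤ d ∧ Computes T f'}.Nonempty := by
      obtain ⟨T, hd, hc⟩ := exists_tree f'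
      exact ⟨m + 1, T, hd, hc⟩
    obtain ⟨T, hd, hc⟩ := Nat.sInf_mem hne'
    apply Nat.sInf_le
    refine ⟨restrict T, le_trans (restrict_depth T) hd, ?_⟩
    intro B
    rw [restrict_eval]
    have hcard : (B.val.map (emb m)).card = k := by rw [Finset.card_map]; exact B.2
    have := hc ⟨B.val.map (emb m), hcard⟩
    rw [this]
    simp only [hf']
    have hex : ∃ B' : Slice m k, B'.val.map (emb m) =
        (⟨B.val.map (emb m), hcard⟩ : Slice (m + 1) k).val := ⟨B, rfl⟩
    rw [dif_pos hex]
    congr 1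
    have hch := hex.choose_spec
    have : hex.choose.val = B.val :=
      Finset.map_injective (emb m) hch
    exact Subtype.ext this
  calc Dquery m k f ≤ Dquery (m + 1) k f' := key
    _ ≤ Dmax (m + 1) k :=
      le_csSup ⟨m + 1, dmax_bdd (m + 1) k⟩ ⟨f', rfl⟩

end Aux

/-- For all `0 ≤ k ≤ n - 1`, one has `D_k(n) ≥ D_k(n-1)`, equivalently
`E_k(n) ≤ E_k(n-1) + 1`. -/
theorem stmt_18 (k n : ℕ) (h : k + 1 ≤ n) :
    Dmax (n - 1) k ≤ Dmax n k ∧ Equery n k ≤ Equery (n - 1) k + 1 := by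
  have hn : n - 1 + 1 = n := by omega
  have h1 : Dmax (n - 1) k ≤ Dmax n k := by
    have := dmax_mono (n - 1) k
    rwa [hn] at this
  refine ⟨h1, ?_⟩
  unfold Equery
  omega
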